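/- For all a₁ > 0, a₂ > 0, y real, q ≠ 0, t > 0, ∫₀ᵗ exp(−y²/(4a₁(t−τ))) · exp(−q²/(4a₂τ)) · 1/(τ^{3/2}·√(t−τ)) dτ = (2√(πa₂)/(|q|√t)) · exp(−(|y|/(2√(a₁t)) + |q|/(2√(a₂t)))²). -/

import Mathlib

open Real MeasureTheory Set

section StmtAux

variable {b c t : ℝ}

private lemma rpow_3half {x : ℝ} (hx : 0 < x) : x ^ ((3:ℝ)/2) = x * Real.sqrt x := by
  rw [show (3:ℝ)/2 = (1:ℝ) + 1/2 by norm_num, Real.rpow_add hx, Real.rpow_one,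
    ← Real.sqrt_eq_rpow]

/-- The substitution map. -/
private noncomputable def Fm (b c t τ : ℝ) : ℝ :=
  (b * Real.sqrt τ / Real.sqrt (t - τ) - c * Real.sqrt (t - τ) / Real.sqrt τ) / Real.sqrt t

/-- Its derivative. -/
private noncomputable def Fd (b c t τ : ℝ) : ℝ :=
  (Real.sqrt t / 2) * (b / (Real.sqrt τ * ((t - τ) * Real.sqrt (t - τ)))
    + c / (τ * Real.sqrt τ * Real.sqrt (t - τ)))

/-- Image-side integrand. -/
private noncomputable def Gm (b c t u : ℝ) : ℝ :=
  (2 / (c * Real.sqrt t)) * Real.exp (-((b + c) / Real.sqrt t) ^ 2) *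
    ((1 - u / Real.sqrt (u ^ 2 + 4 * b * c / t)) / 2 * Real.exp (-u ^ 2))

private lemma Fm_hasDeriv (ht : 0 < t) {τ : ℝ} (hτ : τ ∈ Set.Ioo 0 t) :
    HasDerivAt (Fm b c t) (Fd b c t τ) τ := by
  obtain ⟨h0, h1⟩ := hτ
  have hσ : 0 < t - τ := by linarith
  set p := Real.sqrt τ with hpd
  set s := Real.sqrt (t - τ) with hsd
  set r := Real.sqrt t with hrd
  have hp : 0 < p := Real.sqrt_pos.mpr h0
  have hs : 0 < s := Real.sqrt_pos.mpr hσ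
  have hr : 0 < r := Real.sqrt_pos.mpr ht
  have hp2 : p ^ 2 = τ := Real.sq_sqrt h0.le
  have hs2 : s ^ 2 = t - τ := Real.sq_sqrt hσ.le
  have ht' : r ^ 2 = t := Real.sq_sqrt ht.le
  have d1 : HasDerivAt (fun x : ℝ => Real.sqrt x) (1 / (2 * p)) τ :=
    Real.hasDerivAt_sqrt h0.ne'
  have d2 : HasDerivAt (fun x : ℝ => Real.sqrt (t - x)) (-(1 / (2 * s))) τ := by
    have := (Real.hasDerivAt_sqrt hσ.ne').comp τ ((hasDerivAt_id τ).const_sub t)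
    simpa [Function.comp_def, hsd] using this
  have dA : HasDerivAt (fun x : ℝ => b * Real.sqrt x / Real.sqrt (t - x))
      ((b * (1 / (2 * p)) * s - b * p * (-(1 / (2 * s)))) / s ^ 2) τ :=
    (d1.const_mul b).div d2 hs.ne'
  have dB : HasDerivAt (fun x : ℝ => c * Real.sqrt (t - x) / Real.sqrt x)
      ((c * (-(1 / (2 * s))) * p - c * s * (1 / (2 * p))) / p ^ 2) τ :=
    (d2.const_mul c).div d1 hp.ne'
  have hfin := (dA.sub dB).div_const r
  refine hfin.congr_deriv ?_
  symm
  unfold Fd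
  rw [← hpd, ← hsd, ← hrd, ← hp2, ← ht',
    show r ^ 2 - p ^ 2 = s ^ 2 by rw [hp2, ht', hs2]]
  have hrel : p ^ 2 + s ^ 2 = r ^ 2 := by rw [hp2, hs2, ht']; ring
  field_simp
  linear_combination (-(b*p^2) - c*s^2) * hrel

private lemma Fd_pos (hb : 0 ≤ b) (hc : 0 < c) (ht : 0 < t) {τ : ℝ} (hτ : τ ∈ Set.Ioo 0 t) :
    0 < Fd b c t τ := by
  obtain ⟨h0, h1⟩ := hτ
  have hσ : 0 < t - τ := by linarith
  have hp : 0 < Real.sqrt τ := Real.sqrt_pos.mpr h0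
  have hs : 0 < Real.sqrt (t - τ) := Real.sqrt_pos.mpr hσ
  have hr : 0 < Real.sqrt t := Real.sqrt_pos.mpr ht
  unfold Fd
  have h2 : 0 < c / (τ * Real.sqrt τ * Real.sqrt (t - τ)) := by positivity
  have h3 : 0 ≤ b / (Real.sqrt τ * ((t - τ) * Real.sqrt (t - τ))) := by positivity
  positivity

private lemma Fm_strictMono (hb : 0 ≤ b) (hc : 0 < c) (ht : 0 < t) :
    StrictMonoOn (Fm b c t) (Set.Ioo 0 t) := by
  apply strictMonoOn_of_deriv_pos (convex_Ioo 0 t)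
  · exact fun τ hτ => (Fm_hasDeriv ht hτ).continuousAt.continuousWithinAt
  · intro τ hτ
    rw [interior_Ioo] at hτ
    rw [(Fm_hasDeriv ht hτ).deriv]
    exact Fd_pos hb hc ht hτ

private lemma Fm_mem_image (hb : 0 ≤ b) (hc : 0 < c) (ht : 0 < t) {x z : ℝ} (hx : 0 < x)
    (hz : b * x - c / x = z * Real.sqrt t) : z ∈ Fm b c t '' Set.Ioo 0 t := by
  have hx2 : 0 < 1 + x ^ 2 := by positivity
  have hr : 0 < Real.sqrt t := Real.sqrt_pos.mpr ht
  refine ⟨t * x ^ 2 / (1 + x ^ 2), ⟨by positivity, ?_⟩, ?_⟩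
  · rw [div_lt_iff₀ hx2]; nlinarith
  · have hsub : t - t * x ^ 2 / (1 + x ^ 2) = t / (1 + x ^ 2) := by field_simp; ring
    have h1 : Real.sqrt (t * x ^ 2 / (1 + x ^ 2)) = Real.sqrt t * x / Real.sqrt (1 + x ^ 2) := by
      rw [show t * x ^ 2 / (1 + x ^ 2) = (Real.sqrt t * x / Real.sqrt (1 + x ^ 2)) ^ 2 by
        rw [div_pow, mul_pow, Real.sq_sqrt ht.le, Real.sq_sqrt hx2.le]]
      exact Real.sqrt_sq (by positivity)
    have h2 : Real.sqrt (t / (1 + x ^ 2)) = Real.sqrt t / Real.sqrt (1 + x ^ 2) := by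
      rw [show t / (1 + x ^ 2) = (Real.sqrt t / Real.sqrt (1 + x ^ 2)) ^ 2 by
        rw [div_pow, Real.sq_sqrt ht.le, Real.sq_sqrt hx2.le]]
      exact Real.sqrt_sq (by positivity)
    unfold Fm
    rw [hsub, h1, h2]
    rw [div_eq_iff hr.ne', ← hz]
    have hq : 0 < Real.sqrt (1 + x ^ 2) := Real.sqrt_pos.mpr hx2
    field_simp

private lemma key_pointwise (hb : 0 ≤ b) (hc : 0 < c) (ht : 0 < t) {τ : ℝ}
    (hτ : τ ∈ Set.Ioo 0 t) :
    |Fd b c t τ| * Gm b c t (Fm b c t τ) =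
      Real.exp (-b ^ 2 / (t - τ)) * Real.exp (-c ^ 2 / τ) *
        (1 / (τ ^ ((3:ℝ)/2) * Real.sqrt (t - τ))) := by
  have hτ' := hτ
  obtain ⟨h0, h1⟩ := hτ'
  have hσ : 0 < t - τ := by linarith
  rw [abs_of_pos (Fd_pos hb hc ht hτ), rpow_3half h0]
  set p := Real.sqrt τ with hpd
  set s := Real.sqrt (t - τ) with hsd
  set r := Real.sqrt t with hrd
  have hp : 0 < p := Real.sqrt_pos.mpr h0
  have hs : 0 < s := Real.sqrt_pos.mpr hσ
  have hr : 0 < r := Real.sqrt_pos.mpr ht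
  have hp2 : p ^ 2 = τ := Real.sq_sqrt h0.le
  have hs2 : s ^ 2 = t - τ := Real.sq_sqrt hσ.le
  have ht' : r ^ 2 = t := Real.sq_sqrt ht.le
  have hrel : p ^ 2 + s ^ 2 = r ^ 2 := by rw [hp2, hs2, ht']; ring
  have hWpos : 0 < (b * p / s + c * s / p) / r := by positivity
  have hW : Real.sqrt ((Fm b c t τ) ^ 2 + 4 * b * c / t) = (b * p / s + c * s / p) / r := by
    rw [show (Fm b c t τ) ^ 2 + 4 * b * c / t = ((b * p / s + c * s / p) / r) ^ 2 by
      unfold Fm; rw [← hpd, ← hsd, ← hrd, ← ht']; field_simp; ring]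
    exact Real.sqrt_sq hWpos.le
  have hE : Real.exp (-((b + c) / r) ^ 2) * Real.exp (-(Fm b c t τ) ^ 2) =
      Real.exp (-b ^ 2 / (t - τ)) * Real.exp (-c ^ 2 / τ) := by
    rw [← Real.exp_add, ← Real.exp_add]
    congr 1
    unfold Fm
    rw [← hpd, ← hsd, ← hrd, ← hs2, ← hp2]
    field_simp
    linear_combination (-(b^2*p^2) - c^2*s^2) * hrel
  have halg : Fd b c t τ * ((2 / (c * r)) *
      ((1 - Fm b c t τ / ((b * p / s + c * s / p) / r)) / 2)) = 1 / (τ * p * s) := by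
    unfold Fm Fd
    rw [← hpd, ← hsd, ← hrd, ← hp2]
    rw [show t - p ^ 2 = s ^ 2 by rw [hp2, hs2]]
    have hne : b * p ^ 2 + c * s ^ 2 ≠ 0 := by positivity
    field_simp
    ring
  unfold Gm
  rw [hW, ← hrd]
  calc Fd b c t τ * (2 / (c * r) * Real.exp (-((b + c) / r) ^ 2) *
        ((1 - Fm b c t τ / ((b * p / s + c * s / p) / r)) / 2 * Real.exp (-(Fm b c t τ) ^ 2)))
      = (Fd b c t τ * ((2 / (c * r)) *
          ((1 - Fm b c t τ / ((b * p / s + c * s / p) / r)) / 2))) *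
        (Real.exp (-((b + c) / r) ^ 2) * Real.exp (-(Fm b c t τ) ^ 2)) := by ring
    _ = _ := by rw [halg, hE]; ring

private lemma gauss_int : ∫ u : ℝ, Real.exp (-u ^ 2) = Real.sqrt π := by
  simpa using integral_gaussian 1

private lemma integral_Gm_univ (hb : 0 ≤ b) (hc : 0 < c) (ht : 0 < t) :
    ∫ u, Gm b c t u =
      Real.sqrt π / (c * Real.sqrt t) * Real.exp (-((b + c) / Real.sqrt t) ^ 2) := by
  set k := 4 * b * c / t with hkd
  have hk : 0 ≤ k := by positivity
  set C := (2 / (c * Real.sqrt t)) * Real.exp (-((b + c) / Real.sqrt t) ^ 2) with hCd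
  set φ : ℝ → ℝ := fun u => u / Real.sqrt (u ^ 2 + k) * Real.exp (-u ^ 2) with hφd
  have hint1 : Integrable (fun u : ℝ => Real.exp (-u ^ 2)) := by
    simpa using integrable_exp_neg_mul_sq one_pos
  have hφmeas : AEStronglyMeasurable φ volume := by
    apply Measurable.aestronglyMeasurable
    exact (measurable_id.div ((Real.continuous_sqrt.comp (by continuity)).measurable)).mul
      (Real.continuous_exp.comp (by continuity)).measurable
  have hφbound : ∀ u : ℝ, ‖φ u‖ ≤ Real.exp (-u ^ 2) := by
    intro u
    have h1 : |u| ≤ Real.sqrt (u ^ 2 + k) := by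
      rw [← Real.sqrt_sq_eq_abs]
      exact Real.sqrt_le_sqrt (by linarith)
    have h2 : |u / Real.sqrt (u ^ 2 + k)| ≤ 1 := by
      rw [abs_div, abs_of_nonneg (Real.sqrt_nonneg _)]
      exact div_le_one_of_le₀ h1 (Real.sqrt_nonneg _)
    calc ‖φ u‖ = |u / Real.sqrt (u ^ 2 + k)| * Real.exp (-u ^ 2) := by
          rw [hφd]; simp only [Real.norm_eq_abs, abs_mul, Real.abs_exp]
      _ ≤ 1 * Real.exp (-u ^ 2) := by
          exact mul_le_mul_of_nonneg_right h2 (Real.exp_pos _).le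
      _ = Real.exp (-u ^ 2) := one_mul _
  have hφint : Integrable φ := hint1.mono' hφmeas (Filter.Eventually.of_forall hφbound)
  have hφodd : ∫ u, φ u = 0 := by
    have h1 : ∫ u, φ (-u) = ∫ u, φ u := integral_neg_eq_self φ volume
    have h2 : (fun u => φ (-u)) = fun u => -φ u := by
      funext u; rw [hφd]; simp [neg_div]
    rw [h2, integral_neg] at h1
    linarith
  have hGm : (fun u => Gm b c t u)
      = fun u => C * ((1 / 2) * Real.exp (-u ^ 2) - (1 / 2) * φ u) := by
    funext u
    rw [hφd, hCd, hkd]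
    unfold Gm
    ring
  rw [hGm, integral_const_mul,
    integral_sub (hint1.const_mul _) (hφint.const_mul _), integral_const_mul,
    integral_const_mul, hφodd, gauss_int, hCd]
  ring

private lemma integral_Gm_Iio (hc : 0 < c) (ht : 0 < t) :
    ∫ u in Set.Iio (0:ℝ), Gm 0 c t u =
      Real.sqrt π / (c * Real.sqrt t) * Real.exp (-((0 + c) / Real.sqrt t) ^ 2) := by
  set C := (2 / (c * Real.sqrt t)) * Real.exp (-(((0:ℝ) + c) / Real.sqrt t) ^ 2) with hCd
  have hcong : EqOn (Gm 0 c t) (fun u => C * Real.exp (-u ^ 2)) (Set.Iio 0) := by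
    intro u hu
    have hu0 : u < 0 := hu
    unfold Gm
    rw [hCd]
    have h1 : Real.sqrt (u ^ 2 + 4 * 0 * c / t) = -u := by
      rw [show u ^ 2 + 4 * 0 * c / t = (-u) ^ 2 by ring]
      exact Real.sqrt_sq (by linarith)
    rw [h1, div_neg, div_self hu0.ne]
    ring
  rw [setIntegral_congr_fun measurableSet_Iio hcong, integral_const_mul]
  have h2 : ∫ u in Set.Iio (0:ℝ), Real.exp (-u ^ 2) = ∫ u in Set.Ioi (0:ℝ), Real.exp (-u ^ 2) := by
    rw [setIntegral_congr_set Iio_ae_eq_Iic]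
    have := integral_comp_neg_Iic (0:ℝ) (fun x => Real.exp (-x ^ 2))
    simpa using this
  have h3 : ∫ u in Set.Ioi (0:ℝ), Real.exp (-u ^ 2) = Real.sqrt π / 2 := by
    have := integral_gaussian_Ioi 1
    simpa using this
  rw [h2, h3, hCd]
  ring

private lemma core_integral (hb : 0 ≤ b) (hc : 0 < c) (ht : 0 < t) :
    (∫ τ in Set.Ioo (0:ℝ) t, Real.exp (-b ^ 2 / (t - τ)) * Real.exp (-c ^ 2 / τ) *
        (1 / (τ ^ ((3:ℝ)/2) * Real.sqrt (t - τ)))) =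
      Real.sqrt π / (c * Real.sqrt t) * Real.exp (-((b + c) / Real.sqrt t) ^ 2) := by
  have hr : 0 < Real.sqrt t := Real.sqrt_pos.mpr ht
  have hchg := integral_image_eq_integral_abs_deriv_smul measurableSet_Ioo
    (fun τ hτ => (Fm_hasDeriv ht hτ).hasDerivWithinAt) (Fm_strictMono hb hc ht).injOn
    (Gm b c t)
  have hpt : ∫ τ in Set.Ioo (0:ℝ) t, |Fd b c t τ| • Gm b c t (Fm b c t τ) =
      ∫ τ in Set.Ioo (0:ℝ) t, Real.exp (-b ^ 2 / (t - τ)) * Real.exp (-c ^ 2 / τ) *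
        (1 / (τ ^ ((3:ℝ)/2) * Real.sqrt (t - τ))) := by
    refine setIntegral_congr_fun measurableSet_Ioo (fun τ hτ => ?_)
    rw [smul_eq_mul]
    exact key_pointwise hb hc ht hτ
  rw [← hpt, ← hchg]
  rcases eq_or_lt_of_le hb with hb0 | hbpos
  · have himg : Fm b c t '' Set.Ioo 0 t = Set.Iio 0 := by
      apply Set.eq_of_subset_of_subset
      · rintro _ ⟨τ, hτ, rfl⟩
        obtain ⟨h0, h1⟩ := hτ
        have hσ : 0 < t - τ := by linarith
        have hp : 0 < Real.sqrt τ := Real.sqrt_pos.mpr h0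
        have hs : 0 < Real.sqrt (t - τ) := Real.sqrt_pos.mpr hσ
        have : Fm b c t τ < 0 := by
          unfold Fm
          rw [← hb0]
          apply div_neg_of_neg_of_pos _ hr
          simp only [zero_mul, zero_div, zero_sub]
          exact neg_lt_zero.mpr (by positivity)
        exact this
      · intro z hz
        have hz0 : z < 0 := hz
        have hzr : z * Real.sqrt t < 0 := mul_neg_of_neg_of_pos hz0 hr
        refine Fm_mem_image hb hc ht (x := -(c / (z * Real.sqrt t))) ?_ ?_
        · exact neg_pos.mpr (div_neg_of_pos_of_neg hc hzr)
        · rw [← hb0]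
          field_simp
          rw [div_eq_iff hz0.ne]; ring
    rw [himg, ← hb0, integral_Gm_Iio hc ht, hb0]
  · have himg : Fm b c t '' Set.Ioo 0 t = Set.univ := by
      apply Set.eq_univ_of_forall
      intro z
      set D := Real.sqrt ((z * Real.sqrt t) ^ 2 + 4 * b * c) with hDd
      have hD2 : D ^ 2 = (z * Real.sqrt t) ^ 2 + 4 * b * c := Real.sq_sqrt (by positivity)
      have hDgt : |z * Real.sqrt t| < D := by
        rw [← Real.sqrt_sq_eq_abs, hDd]
        apply Real.sqrt_lt_sqrt (sq_nonneg _)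
        nlinarith
      have hsum : 0 < z * Real.sqrt t + D := by
        have h1 := abs_nonneg (z * Real.sqrt t)
        have h2 := neg_abs_le (z * Real.sqrt t)
        linarith
      have hxpos : 0 < (z * Real.sqrt t + D) / (2 * b) := div_pos hsum (by linarith)
      refine Fm_mem_image hb hc ht hxpos ?_
      have hxne : (z * Real.sqrt t + D) ≠ 0 := hsum.ne'
      field_simp
      linear_combination hD2
    rw [himg, setIntegral_univ]
    exact integral_Gm_univ hb hc ht

end StmtAux

theorem stmt3 (a₁ a₂ y q t : ℝ) (ha₁ : 0 < a₁) (ha₂ : 0 < a₂) (hq : q ≠ 0) (ht : 0 < t) :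
    (∫ τ in Set.Ioo (0 : ℝ) t,
        Real.exp (-y ^ 2 / (4 * a₁ * (t - τ))) * Real.exp (-q ^ 2 / (4 * a₂ * τ)) *
          (1 / (τ ^ ((3 : ℝ) / 2) * Real.sqrt (t - τ)))) =
      (2 * Real.sqrt (π * a₂) / (|q| * Real.sqrt t)) *
        Real.exp (-(|y| / (2 * Real.sqrt (a₁ * t)) + |q| / (2 * Real.sqrt (a₂ * t))) ^ 2) := by
  have hs₁ : 0 < Real.sqrt a₁ := Real.sqrt_pos.mpr ha₁
  have hs₂ : 0 < Real.sqrt a₂ := Real.sqrt_pos.mpr ha₂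
  have hst : 0 < Real.sqrt t := Real.sqrt_pos.mpr ht
  have hqa : 0 < |q| := abs_pos.mpr hq
  set b := |y| / (2 * Real.sqrt a₁) with hbd
  set c := |q| / (2 * Real.sqrt a₂) with hcd
  have hb : 0 ≤ b := by positivity
  have hc : 0 < c := by positivity
  have hbsq : b ^ 2 = y ^ 2 / (4 * a₁) := by
    rw [hbd, div_pow, mul_pow, sq_abs, Real.sq_sqrt ha₁.le]; norm_num
  have hcsq : c ^ 2 = q ^ 2 / (4 * a₂) := by
    rw [hcd, div_pow, mul_pow, sq_abs, Real.sq_sqrt ha₂.le]; norm_num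
  have h1 : ∀ τ : ℝ, -y ^ 2 / (4 * a₁ * (t - τ)) = -b ^ 2 / (t - τ) := by
    intro τ
    rw [hbsq, neg_div, neg_div, div_div]
  have h2 : ∀ τ : ℝ, -q ^ 2 / (4 * a₂ * τ) = -c ^ 2 / τ := by
    intro τ
    rw [hcsq, neg_div, neg_div, div_div]
  simp_rw [h1, h2]
  rw [core_integral hb hc ht]
  have e1 : (b + c) / Real.sqrt t =
      |y| / (2 * Real.sqrt (a₁ * t)) + |q| / (2 * Real.sqrt (a₂ * t)) := by
    rw [Real.sqrt_mul ha₁.le, Real.sqrt_mul ha₂.le, hbd, hcd]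
    field_simp
  rw [e1]
  rw [Real.sqrt_mul Real.pi_pos.le, hcd]
  field_simp
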